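/- Let g ≥ 1, let x_1 < x_2 < … < x_n be real numbers, and let s = (s_1,…,s_n) with each s_i ∈ {−1,0,1} satisfy ch(s) ≥ g. Then there exists a non-zero real solution h = (h_1,…,h_n) of the dual Vandermonde system ∑_{i=1}^n x_i^k h_i = 0 (k = 0,…,g−1) such that sign(h_i) = s_i for every i = 1,…,n. -/

import Mathlib

open Finset

/-- The number of sign changes of a finite sequence `h : Fin n → ℝ`:
the number of pairs `i < j` with `h i * h j < 0` and `h k = 0` for all `i < k < j`. -/
noncomputable def signChanges {n : ℕ} (h : Fin n → ℝ) : ℕ :=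
  Set.ncard {p : Fin n × Fin n | p.1 < p.2 ∧ h p.1 * h p.2 < 0 ∧
    ∀ k : Fin n, p.1 < k → k < p.2 → h k = 0}

lemma vandermonde_dual {m : ℕ} (y : Fin (m + 1) → ℝ) (k : ℕ) (hk : k < m) :
    ∑ j : Fin (m + 1), (-1) ^ (j : ℕ) * y j ^ k *
      Matrix.det (Matrix.vandermonde (y ∘ Fin.succAbove j)) = 0 := by
  set M : Matrix (Fin (m + 1)) (Fin (m + 1)) ℝ :=
    Matrix.of fun i l => if (l : ℕ) < m then y i ^ (l : ℕ) else y i ^ k with hM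
  have hdet : M.det = 0 := by
    apply Matrix.det_zero_of_column_eq (i := (⟨k, by omega⟩ : Fin (m+1))) (j := Fin.last m)
    · exact Fin.ne_of_val_ne (by simp; omega)
    · intro i
      simp [hM, Matrix.of_apply, hk, Fin.last]
  have hexp := Matrix.det_succ_column M (Fin.last m)
  rw [hdet] at hexp
  have hsub : ∀ i : Fin (m + 1),
      (-1:ℝ) ^ ((i:ℕ) + ((Fin.last m : Fin (m+1)) : ℕ)) * M i (Fin.last m) *
        Matrix.det (M.submatrix i.succAbove (Fin.last m).succAbove)
        = (-1) ^ (m : ℕ) * ((-1) ^ (i : ℕ) * y i ^ k *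
            Matrix.det (Matrix.vandermonde (y ∘ i.succAbove))) := by
    intro i
    have h1 : Matrix.det (M.submatrix i.succAbove (Fin.last m).succAbove)
        = Matrix.det (Matrix.vandermonde (y ∘ i.succAbove)) := by
      congr 1
      ext r l
      simp [hM, Matrix.vandermonde, Fin.succAbove_last, Fin.is_lt, l.is_lt]
    have h2 : M i (Fin.last m) = y i ^ k := by simp [hM]
    rw [h1, h2, Fin.val_last, pow_add]
    ring
  rw [Finset.sum_congr rfl (fun i _ => hsub i), ← Finset.mul_sum] at hexp
  have := hexp.symm
  rcases mul_eq_zero.mp this with h | h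
  · exact absurd h (by positivity)
  · exact h

/-- helper: values in {-1,0,1} with negative product. -/
lemma tri_eq_neg_of_mul_neg {a b : ℝ} (ha : a = -1 ∨ a = 0 ∨ a = 1)
    (hb : b = -1 ∨ b = 0 ∨ b = 1) (h : a * b < 0) : b = -a := by
  rcases ha with rfl | rfl | rfl <;> rcases hb with rfl | rfl | rfl <;> linarith

lemma tri_mul_neg_of_ne {a b : ℝ} (ha : a = -1 ∨ a = 0 ∨ a = 1)
    (hb : b = -1 ∨ b = 0 ∨ b = 1) (ha0 : a ≠ 0) (hb0 : b ≠ 0) (hne : b ≠ a) : a * b < 0 := by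
  rcases ha with rfl | rfl | rfl <;> rcases hb with rfl | rfl | rfl <;> norm_num at * 

def scPairs {n : ℕ} (s : Fin n → ℝ) : Set (Fin n × Fin n) :=
  {p : Fin n × Fin n | p.1 < p.2 ∧ s p.1 * s p.2 < 0 ∧
    ∀ k : Fin n, p.1 < k → k < p.2 → s k = 0}

lemma scPairs_partner_unique {n : ℕ} {s : Fin n → ℝ} {a b b' : Fin n}
    (h1 : (a, b) ∈ scPairs s) (h2 : (a, b') ∈ scPairs s) : b = b' := by
  by_contra hne
  rcases lt_or_gt_of_ne hne with h | h
  · exact right_ne_zero_of_mul h1.2.1.ne (h2.2.2 b h1.1 h)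
  · exact right_ne_zero_of_mul h2.2.1.ne (h1.2.2 b' h2.1 h)

lemma strictMono_snoc {m : ℕ} {α : Type*} [Preorder α] {f : Fin m → α} {z : α}
    (hf : StrictMono f) (hz : ∀ j, f j < z) : StrictMono (Fin.snoc f z) := by
  intro i j hij
  rcases Fin.eq_castSucc_or_eq_last j with ⟨j0, rfl⟩ | rfl
  · have hi : i ≠ Fin.last m := by
      intro h
      rw [h] at hij
      exact ((Fin.castSucc_lt_last j0).trans hij).false
    obtain ⟨i0, rfl⟩ := Fin.exists_castSucc_eq.mpr hi
    simp only [Fin.snoc_castSucc]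
    exact hf (Fin.castSucc_lt_castSucc_iff.mp hij)
  · have hi : i ≠ Fin.last m := ne_of_lt hij
    obtain ⟨i0, rfl⟩ := Fin.exists_castSucc_eq.mpr hi
    simp only [Fin.snoc_castSucc, Fin.snoc_last]
    exact hz i0

/-- Extraction of an alternating chain ending at the last nonzero entry. -/
lemma exists_alt_chain {n : ℕ} : ∀ (g : ℕ) (s : Fin n → ℝ),
    (∀ i, s i = -1 ∨ s i = 0 ∨ s i = 1) → g ≤ (scPairs s).ncard → (∃ i, s i ≠ 0) →
    ∃ c : Fin (g + 1) → Fin n, StrictMono c ∧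
      (∀ j : Fin g, s (c j.castSucc) * s (c j.succ) < 0) ∧
      s (c (Fin.last g)) ≠ 0 ∧ ∀ q, c (Fin.last g) < q → s q = 0 := by
  intro g
  induction g with
  | zero =>
    intro s _ _ hne
    classical
    obtain ⟨i0, hi0⟩ := hne
    obtain ⟨l, hlmem, hlmax⟩ := Finset.exists_max_image
      (Finset.univ.filter fun q => s q ≠ 0) id ⟨i0, by simp [hi0]⟩
    simp only [Finset.mem_filter, Finset.mem_univ, true_and] at hlmem hlmax
    refine ⟨fun _ => l, fun i j hij => absurd hij (by omega), fun j => j.elim0,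
      hlmem, fun q hq => ?_⟩
    by_contra h
    exact absurd (hlmax q (by simpa using h)) (not_le.mpr hq)
  | succ g IH =>
    intro s hs hch hne
    classical
    have hfin : (scPairs s).Finite := Set.toFinite _
    have hPne : (scPairs s).Nonempty := Set.nonempty_of_ncard_ne_zero (by omega)
    obtain ⟨p0, hp0mem, hp0max⟩ := Finset.exists_max_image hfin.toFinset (fun p => p.1)
      (by simpa [Set.Finite.toFinset] using hPne)
    have hp0 : (p0.1, p0.2) ∈ scPairs s := by
      have := hfin.mem_toFinset.mp hp0mem
      simpa using this
    set a := p0.1 with ha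
    set b := p0.2 with hb
    have hp0max' : ∀ p ∈ scPairs s, p.1 ≤ a := fun p hp => hp0max p (hfin.mem_toFinset.mpr hp)
    have hab : a < b := hp0.1
    have hsab : s a * s b < 0 := hp0.2.1
    have hsa : s a ≠ 0 := left_ne_zero_of_mul hsab.ne
    have hsb : s b ≠ 0 := right_ne_zero_of_mul hsab.ne
    set s' : Fin n → ℝ := fun q => if b ≤ q then 0 else s q with hs'def
    have hs'val : ∀ i, s' i = -1 ∨ s' i = 0 ∨ s' i = 1 := by
      intro i
      simp only [hs'def]
      split
      · exact Or.inr (Or.inl rfl)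
      · exact hs i
    have hs'eq : ∀ q, q < b → s' q = s q := fun q hq => if_neg (not_le.mpr hq)
    have hset : scPairs s' = scPairs s \ {(a, b)} := by
      ext ⟨p, q⟩
      constructor
      · rintro ⟨hpq, hmul, hbet⟩
        have hpb : p < b := by
          by_contra h
          push_neg at h
          simp only [hs'def, if_pos h, zero_mul] at hmul
          exact absurd hmul (lt_irrefl 0)
        have hqb : q < b := by
          by_contra h
          push_neg at h
          simp only [hs'def, if_pos h, mul_zero] at hmul
          exact absurd hmul (lt_irrefl 0)
        refine ⟨⟨hpq, ?_, ?_⟩, ?_⟩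
        · rwa [hs'eq p hpb, hs'eq q hqb] at hmul
        · intro k hk1 hk2
          have := hbet k hk1 hk2
          rwa [hs'eq k (hk2.trans hqb)] at this
        · simp only [Set.mem_singleton_iff, Prod.mk.injEq, not_and]
          intro _ hqb'
          exact absurd hqb' hqb.ne
      · rintro ⟨⟨hpq, hmul, hbet⟩, hneq⟩
        have hpa : p ≤ a := hp0max' (p, q) ⟨hpq, hmul, hbet⟩
        have hqa : q ≤ a := by
          rcases lt_or_eq_of_le hpa with h | h
          · by_contra hq
            push_neg at hq
            exact hsa (hbet a h hq)
          · exfalso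
            subst h
            exact hneq (by rw [scPairs_partner_unique ⟨hpq, hmul, hbet⟩ hp0]; rfl)
        have hqb : q < b := lt_of_le_of_lt hqa hab
        exact ⟨hpq, by rwa [hs'eq p (hpq.trans hqb), hs'eq q hqb],
          fun k hk1 hk2 => by rw [hs'eq k (hk2.trans hqb)]; exact hbet k hk1 hk2⟩
    have hch' : g ≤ (scPairs s').ncard := by
      rw [hset, Set.ncard_diff_singleton_of_mem hp0]
      omega
    have hne' : ∃ i, s' i ≠ 0 := ⟨a, by rw [hs'eq a hab]; exact hsa⟩
    obtain ⟨c', hc'mono, hc'alt, hc'nz, hc'last⟩ := IH s' hs'val hch' hne'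
    have hnz' : ∀ j, s' (c' j) ≠ 0 := by
      intro j
      rcases eq_or_ne j (Fin.last g) with rfl | hj
      · exact hc'nz
      · obtain ⟨j0, rfl⟩ := Fin.exists_castSucc_eq.mpr hj
        exact left_ne_zero_of_mul (hc'alt j0).ne
    have hlt : ∀ j, c' j < b := by
      intro j
      by_contra h
      push_neg at h
      exact hnz' j (by simp only [hs'def, if_pos h])
    have hseq : ∀ j, s (c' j) = s' (c' j) := fun j => (hs'eq _ (hlt j)).symm
    have hc'a : c' (Fin.last g) = a := by
      refine le_antisymm ?_ ?_
      · by_contra h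
        push_neg at h
        exact hc'nz ((hseq _) ▸ hp0.2.2 _ h (hlt _))
      · by_contra h
        push_neg at h
        have := hc'last a h
        rw [hs'eq a hab] at this
        exact hsa this
    -- last nonzero index of s
    obtain ⟨l, hlmem, hlmax⟩ := Finset.exists_max_image
      (Finset.univ.filter fun q => s q ≠ 0) id ⟨b, by simp [hsb]⟩
    simp only [Finset.mem_filter, Finset.mem_univ, true_and, id] at hlmem hlmax
    have hbl : b ≤ l := hlmax b hsb
    have hlzero : ∀ q, l < q → s q = 0 := by
      intro q hq
      by_contra h
      exact absurd (hlmax q h) (not_le.mpr hq)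
    -- all nonzero entries ≥ b have sign s b
    have hsame : ∀ q, b ≤ q → s q ≠ 0 → s q = s b := by
      intro q' hq' hq'nz
      by_contra hbad
      obtain ⟨m, hmmem, hmmin⟩ := Finset.exists_min_image
        (Finset.univ.filter fun m => b ≤ m ∧ s m ≠ 0 ∧ s m ≠ s b) id
        ⟨q', by simp [hq', hq'nz, hbad]⟩
      simp only [Finset.mem_filter, Finset.mem_univ, true_and, id] at hmmem hmmin
      obtain ⟨hbm, hmnz, hmne⟩ := hmmem
      have hbmlt : b < m := lt_of_le_of_ne hbm (fun h => hmne (h ▸ rfl))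
      obtain ⟨a', ha'mem, ha'max⟩ := Finset.exists_max_image
        (Finset.univ.filter fun r => r < m ∧ s r ≠ 0) id ⟨b, by simp [hbmlt, hsb]⟩
      simp only [Finset.mem_filter, Finset.mem_univ, true_and, id] at ha'mem ha'max
      obtain ⟨ha'm, ha'nz⟩ := ha'mem
      have hba' : b ≤ a' := ha'max b ⟨hbmlt, hsb⟩
      have ha'sign : s a' = s b := by
        by_contra h
        exact absurd (hmmin a' ⟨hba', ha'nz, h⟩) (not_le.mpr ha'm)
      have hpair : (a', m) ∈ scPairs s := by
        refine ⟨ha'm, ?_, ?_⟩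
        · exact tri_mul_neg_of_ne (hs a') (hs m) ha'nz hmnz (by rw [ha'sign]; exact hmne)
        · intro k hk1 hk2
          by_contra h
          exact absurd (ha'max k ⟨hk2, h⟩) (not_le.mpr hk1)
      have := hp0max' (a', m) hpair
      exact absurd (lt_of_lt_of_le hab (hba'.trans this)) (lt_irrefl _)
    have hsl : s l = s b := hsame l hbl hlmem
    -- build the chain
    have hlgt : ∀ j, c' j < l := fun j => lt_of_lt_of_le (hlt j) hbl
    refine ⟨Fin.snoc c' l, strictMono_snoc hc'mono hlgt, ?_, ?_, ?_⟩
    · intro j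
      rcases Fin.eq_castSucc_or_eq_last j with ⟨j0, rfl⟩ | rfl
      · rw [Fin.succ_castSucc]
        simp only [Fin.snoc_castSucc]
        rw [hseq, hseq]
        exact hc'alt j0
      · rw [Fin.succ_last]
        simp only [Fin.snoc_castSucc, Fin.snoc_last]
        rw [hc'a, hsl]
        exact hsab
    · rw [Fin.snoc_last]
      rw [hsl]
      exact hsb
    · rw [Fin.snoc_last]
      exact hlzero

noncomputable def extendFun {n m : ℕ} (c : Fin m → Fin n) (v : Fin m → ℝ) (d : Fin n → ℝ) :
    Fin n → ℝ :=
  fun q => if hq : ∃ j, c j = q then v hq.choose else d q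

lemma extendFun_apply {n m : ℕ} {c : Fin m → Fin n} (hc : Function.Injective c)
    (v : Fin m → ℝ) (d : Fin n → ℝ) (j : Fin m) : extendFun c v d (c j) = v j := by
  have hq : ∃ j', c j' = c j := ⟨j, rfl⟩
  simp only [extendFun, dif_pos hq]
  congr 1
  exact hc hq.choose_spec

lemma extendFun_of_not {n m : ℕ} (c : Fin m → Fin n) (v : Fin m → ℝ) (d : Fin n → ℝ)
    (q : Fin n) (h : ¬ ∃ j, c j = q) : extendFun c v d q = d q := dif_neg h

lemma sum_mul_extendFun {n m : ℕ} {c : Fin m → Fin n} (hc : Function.Injective c)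
    (v : Fin m → ℝ) (d : Fin n → ℝ) (f : Fin n → ℝ) :
    ∑ q, f q * extendFun c v d q =
      (∑ j, f (c j) * v j) +
        ∑ q ∈ Finset.univ \ Finset.image c Finset.univ, f q * d q := by
  classical
  rw [← Finset.sum_sdiff (Finset.subset_univ (Finset.image c Finset.univ))]
  rw [add_comm]
  congr 1
  · rw [Finset.sum_image (fun x _ y _ h => hc h)]
    exact Finset.sum_congr rfl fun j _ => by rw [extendFun_apply hc]
  · refine Finset.sum_congr rfl fun q hq => ?_
    rw [extendFun_of_not]
    rintro ⟨j, hj⟩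
    simp only [Finset.mem_sdiff, Finset.mem_univ, true_and, Finset.mem_image] at hq
    exact hq ⟨j, hj⟩

/-- If a `{-1,0,1}`-valued sequence `s` has at least `g` sign changes, then `s` is
the sequence of signs of a nonzero solution of the dual Vandermonde system. -/
theorem exists_nonzero_solution_with_signs (g n : ℕ) (hg : 1 ≤ g)
    (x : Fin n → ℝ) (hx : StrictMono x)
    (s : Fin n → ℝ) (hs : ∀ i, s i = -1 ∨ s i = 0 ∨ s i = 1)
    (hch : g ≤ signChanges s) :
    ∃ h : Fin n → ℝ, h ≠ 0 ∧ (∀ k, k < g → ∑ i, x i ^ k * h i = 0) ∧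
      ∀ i, Real.sign (h i) = s i := by
  classical
  obtain ⟨g', rfl⟩ : ∃ g', g = g' + 1 := ⟨g - 1, by omega⟩
  have hch' : g' + 1 ≤ (scPairs s).ncard := hch
  have hPne : (scPairs s).Nonempty := Set.nonempty_of_ncard_ne_zero (by omega)
  obtain ⟨⟨a0, b0⟩, hp⟩ := hPne
  have hne : ∃ i, s i ≠ 0 := ⟨a0, left_ne_zero_of_mul hp.2.1.ne⟩
  obtain ⟨c, hcmono, hcalt, -, -⟩ := exists_alt_chain (g' + 1) s hs hch' hne
  -- every chain entry is nonzero
  have hcnz : ∀ j, s (c j) ≠ 0 := by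
    intro j
    rcases eq_or_ne j (Fin.last (g' + 1)) with rfl | hj
    · have h := hcalt (Fin.last g')
      rw [Fin.succ_last] at h
      exact right_ne_zero_of_mul h.ne
    · obtain ⟨j0, rfl⟩ := Fin.exists_castSucc_eq.mpr hj
      exact left_ne_zero_of_mul (hcalt j0).ne
  -- sign formula along the chain
  have hsign : ∀ j : Fin (g' + 2), s (c j) = s (c 0) * (-1) ^ (j : ℕ) := by
    intro j
    induction j using Fin.induction with
    | zero => simp
    | succ j0 ih =>
      have h := tri_eq_neg_of_mul_neg (hs _) (hs _) (hcalt j0)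
      rw [h, ih, Fin.val_succ, Fin.coe_castSucc, pow_succ]
      ring
  set V : Fin (g' + 2) → ℝ :=
    fun j => (Matrix.vandermonde (x ∘ c ∘ j.succAbove)).det with hV
  have hVpos : ∀ j, 0 < V j := by
    intro j
    show 0 < (Matrix.vandermonde (x ∘ c ∘ j.succAbove)).det
    rw [Matrix.det_vandermonde]
    refine Finset.prod_pos fun i _ => Finset.prod_pos fun l hl => ?_
    exact sub_pos.mpr (hx (hcmono (Fin.strictMono_succAbove j (Finset.mem_Ioi.mp hl))))
  set val : Fin (g' + 2) → ℝ := fun j => s (c j) * V j with hval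
  set hcf : Fin n → ℝ := extendFun c val 0 with hhcf
  have hmom1 : ∀ k : ℕ, k < g' + 1 → ∑ q, x q ^ k * hcf q = 0 := by
    intro k hk
    rw [hhcf, sum_mul_extendFun hcmono.injective]
    simp only [Pi.zero_apply, mul_zero, Finset.sum_const_zero, add_zero]
    have h3 : ∑ j, x (c j) ^ k * val j
        = s (c 0) * ∑ j : Fin (g' + 2), (-1) ^ (j : ℕ) * (x ∘ c) j ^ k *
            (Matrix.vandermonde ((x ∘ c) ∘ Fin.succAbove j)).det := by
      rw [Finset.mul_sum]
      refine Finset.sum_congr rfl fun j _ => ?_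
      rw [hval]
      simp only [Function.comp_assoc]
      rw [hsign j]
      simp only [Function.comp_apply, hV]
      ring
    rw [h3, vandermonde_dual (x ∘ c) k hk, mul_zero]
  -- the correction vector
  set A : Matrix (Fin (g' + 1)) (Fin (g' + 1)) ℝ :=
    Matrix.of fun k j => x (c (Fin.succ j)) ^ (k : ℕ) with hA
  have hAdet : IsUnit A.det := by
    have h1 : A = (Matrix.vandermonde fun j => x (c (Fin.succ j))).transpose := by
      ext k j
      rw [Matrix.transpose_apply, Matrix.vandermonde_apply]
      rfl
    rw [h1, Matrix.det_transpose, Matrix.det_vandermonde]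
    have hpos : (0:ℝ) < ∏ i : Fin (g' + 1), ∏ l ∈ Finset.Ioi i,
        ((fun j => x (c (Fin.succ j))) l - (fun j => x (c (Fin.succ j))) i) := by
      refine Finset.prod_pos fun i _ => Finset.prod_pos fun l hl => ?_
      exact sub_pos.mpr (hx (hcmono (Fin.succ_lt_succ_iff.mpr (Finset.mem_Ioi.mp hl))))
    exact isUnit_iff_ne_zero.mpr hpos.ne'
  have hinj2 : Function.Injective fun j => c (Fin.succ j) :=
    hcmono.injective.comp (Fin.succ_injective _)
  set bv : Fin (g' + 1) → ℝ := fun k =>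
    -∑ q ∈ Finset.univ \ Finset.image (fun j => c (Fin.succ j)) Finset.univ,
        x q ^ (k : ℕ) * s q with hbv
  obtain ⟨u, hu⟩ : ∃ u, A.mulVec u = bv :=
    ⟨A⁻¹.mulVec bv, by rw [Matrix.mulVec_mulVec, Matrix.mul_nonsing_inv A hAdet,
      Matrix.one_mulVec]⟩
  set w : Fin n → ℝ := extendFun (fun j => c (Fin.succ j)) u s with hw
  have hmom2 : ∀ k : ℕ, k < g' + 1 → ∑ q, x q ^ k * w q = 0 := by
    intro k hk
    rw [hw, sum_mul_extendFun hinj2]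
    have h1 : ∑ j, x (c (Fin.succ j)) ^ k * u j = A.mulVec u ⟨k, hk⟩ := by
      simp only [Matrix.mulVec, dotProduct, hA, Matrix.of_apply]
    rw [h1, hu, hbv]
    simp
  -- choose the scale
  set Mc : ℝ := 1 + ∑ j, |w (c j)| / V j with hMc
  have hMcb : ∀ j, |w (c j)| < Mc * V j := by
    intro j
    have h1 : |w (c j)| / V j ≤ ∑ j', |w (c j')| / V j' :=
      Finset.single_le_sum (f := fun j' => |w (c j')| / V j')
        (fun j' _ => div_nonneg (abs_nonneg _) (hVpos j').le) (Finset.mem_univ j)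
    have h2 : |w (c j)| = |w (c j)| / V j * V j := (div_mul_cancel₀ _ (hVpos j).ne').symm
    have h3 := hVpos j
    have h5 : |w (c j)| / V j * V j ≤ (∑ j', |w (c j')| / V j') * V j :=
      mul_le_mul_of_nonneg_right h1 h3.le
    rw [hMc]
    calc |w (c j)| = |w (c j)| / V j * V j := h2
      _ ≤ (∑ j', |w (c j')| / V j') * V j := h5
      _ < (1 + ∑ j', |w (c j')| / V j') * V j := by nlinarith [h3]
  set h : Fin n → ℝ := fun q => Mc * hcf q + w q with hh
  have hsgn : ∀ i, Real.sign (h i) = s i := by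
    intro q
    by_cases hq : ∃ j, c j = q
    · obtain ⟨j, rfl⟩ := hq
      have hhc : hcf (c j) = s (c j) * V j := extendFun_apply hcmono.injective _ _ j
      have habs := hMcb j
      rw [abs_lt] at habs
      rcases hs (c j) with h1 | h1 | h1
      · have hlt : h (c j) < 0 := by
          rw [hh]
          simp only
          rw [hhc, h1]
          nlinarith [habs.1, habs.2]
        rw [Real.sign_of_neg hlt, h1]
      · exact absurd h1 (hcnz j)
      · have hgt : 0 < h (c j) := by
          rw [hh]
          simp only
          rw [hhc, h1]
          nlinarith [habs.1, habs.2]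
        rw [Real.sign_of_pos hgt, h1]
    · have hq2 : ¬ ∃ j, c (Fin.succ j) = q := fun ⟨j, hj⟩ => hq ⟨Fin.succ j, hj⟩
      have hw0 : w q = s q := extendFun_of_not _ _ _ _ hq2
      have hc0 : hcf q = 0 := extendFun_of_not _ _ _ _ hq
      have hval : h q = s q := by rw [hh]; simp only; rw [hc0, hw0]; ring
      rw [hval]
      rcases hs q with h1 | h1 | h1 <;> rw [h1]
      · exact Real.sign_of_neg (by norm_num)
      · exact Real.sign_zero
      · exact Real.sign_of_pos (by norm_num)
  refine ⟨h, ?_, ?_, hsgn⟩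
  · intro h0
    have h1 := hsgn (c 0)
    rw [h0] at h1
    simp only [Pi.zero_apply, Real.sign_zero] at h1
    exact hcnz 0 h1.symm
  · intro k hk
    have hsum : ∑ q, x q ^ k * h q
        = Mc * (∑ q, x q ^ k * hcf q) + ∑ q, x q ^ k * w q := by
      rw [Finset.mul_sum, ← Finset.sum_add_distrib]
      exact Finset.sum_congr rfl fun q _ => by rw [hh]; ring
    rw [hsum, hmom1 k hk, hmom2 k hk, mul_zero, add_zero]
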